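/- Let (Ω, ℙ) be a probability space, let X, Y : Ω → ℝ be independent random variables, let e denote Euler's number, and let λ_h, λ_a, T be positive reals with λ_h > e·λ_a. Set ν = (λ_h - e·λ_a)/3. Suppose ℙ(X < λ_h T - ν T) ≤ 2·exp(-ν² T / (3 λ_h)) and ℙ(Y > e·λ_a T + ν T) ≤ exp(-ν T). Then ℙ(X > Y) ≥ (1 - 2·exp(-ν² T / (3 λ_h)))·(1 - exp(-ν T)). -/

import Mathlib

open MeasureTheory ProbabilityTheory

/-- mathematical content of Lemma 9: under the same tail bounds and
independence, `ℙ(X > Y) ≥ (1 - 2·exp(-ν²T/(3λ_h)))·(1 - exp(-νT))`. -/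
theorem longest_chain_wins {Ω : Type*} [MeasureSpace Ω] [IsProbabilityMeasure (ℙ : Measure Ω)]
    (X Y : Ω → ℝ) (hX : Measurable X) (hY : Measurable Y)
    (hindep : IndepFun X Y ℙ)
    (e lamh lama T : ℝ) (he : e = Real.exp 1)
    (hlamh : 0 < lamh) (hlama : 0 < lama) (hT : 0 < T) (hgt : lamh > e * lama)
    (ν : ℝ) (hν : ν = (lamh - e * lama) / 3)
    (hXbound : ℙ {ω | X ω < lamh * T - ν * T} ≤
      ENNReal.ofReal (2 * Real.exp (-(ν ^ 2 * T) / (3 * lamh))))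
    (hYbound : ℙ {ω | Y ω > e * lama * T + ν * T} ≤ ENNReal.ofReal (Real.exp (-(ν * T)))) :
    ℙ {ω | X ω > Y ω} ≥
      ENNReal.ofReal
        ((1 - 2 * Real.exp (-(ν ^ 2 * T) / (3 * lamh))) * (1 - Real.exp (-(ν * T)))) := by
  set p : ℝ := 2 * Real.exp (-(ν ^ 2 * T) / (3 * lamh)) with hp
  set q : ℝ := Real.exp (-(ν * T)) with hq
  have hνpos : 0 < ν := by
    rw [hν]; linarith
  set a : ℝ := lamh * T - ν * T with ha
  set b : ℝ := e * lama * T + ν * T with hb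
  have hab : b < a := by
    have h3 : lamh - e * lama = 3 * ν := by rw [hν]; ring
    have : a - b = ν * T := by
      rw [ha, hb]
      nlinarith [mul_pos hνpos hT]
    linarith [mul_pos hνpos hT]
  set A : Set Ω := X ⁻¹' Set.Ici a with hA
  set B : Set Ω := Y ⁻¹' Set.Iic b with hB
  have hmeasA : MeasurableSet A := hX measurableSet_Ici
  have hmeasB : MeasurableSet B := hY measurableSet_Iic
  have hAc : Aᶜ = {ω | X ω < a} := by
    ext ω; simp [hA]
  have hBc : Bᶜ = {ω | Y ω > b} := by
    ext ω; simp [hB]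
  have hPA : 1 - ENNReal.ofReal p ≤ ℙ A := by
    have h1 : ℙ A = 1 - ℙ Aᶜ := by
      rw [← prob_compl_eq_one_sub hmeasA.compl, compl_compl]
    rw [h1, hAc]
    exact tsub_le_tsub_left hXbound 1
  have hPB : 1 - ENNReal.ofReal q ≤ ℙ B := by
    have h1 : ℙ B = 1 - ℙ Bᶜ := by
      rw [← prob_compl_eq_one_sub hmeasB.compl, compl_compl]
    rw [h1, hBc]
    exact tsub_le_tsub_left hYbound 1
  have hsub : A ∩ B ⊆ {ω | X ω > Y ω} := by
    rintro ω ⟨h1, h2⟩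
    have hx : a ≤ X ω := h1
    have hy : Y ω ≤ b := h2
    exact lt_of_le_of_lt hy (lt_of_lt_of_le hab hx)
  have hindep' : ℙ (A ∩ B) = ℙ A * ℙ B :=
    hindep.measure_inter_preimage_eq_mul _ _ measurableSet_Ici measurableSet_Iic
  have hq1 : q < 1 := by
    rw [hq]
    have : -(ν * T) < 0 := by nlinarith
    calc Real.exp (-(ν * T)) < Real.exp 0 := Real.exp_lt_exp.mpr this
      _ = 1 := Real.exp_zero
  have key : ENNReal.ofReal ((1 - p) * (1 - q)) ≤ (1 - ENNReal.ofReal p) * (1 - ENNReal.ofReal q) := by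
    rcases le_or_gt 1 p with hp1 | hp1
    · have : (1 - p) * (1 - q) ≤ 0 := mul_nonpos_of_nonpos_of_nonneg (by linarith) (by linarith)
      rw [ENNReal.ofReal_eq_zero.mpr this]
      exact zero_le
    · have hp0 : 0 ≤ p := by positivity
      have hq0 : 0 ≤ q := by positivity
      rw [ENNReal.ofReal_mul (by linarith), ENNReal.ofReal_sub 1 hp0,
        ENNReal.ofReal_sub 1 hq0, ENNReal.ofReal_one]
  calc ENNReal.ofReal ((1 - p) * (1 - q))
      ≤ (1 - ENNReal.ofReal p) * (1 - ENNReal.ofReal q) := key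
    _ ≤ ℙ A * ℙ B := mul_le_mul' hPA hPB
    _ = ℙ (A ∩ B) := hindep'.symm
    _ ≤ ℙ {ω | X ω > Y ω} := measure_mono hsub
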